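/- arXiv:math/0503291 — 2 statements merged into one kernel-verified Lean document; each statement's English description precedes it below -/
import Mathlib

section
/- Let μ : ℤ^r → ℤ be a surjective group homomorphism and let ℤ^r act on the Laurent polynomial ring ℤ[λ, λ^{−1}] by m · a = λ^{μ(m)} a. Then for every 1-cocycle α : ℤ^r → ℤ[λ, λ^{−1}] (i.e. α(m+m') = λ^{μ(m)} α(m') + α(m) for all m, m') there exists η ∈ ℤ[λ, λ^{−1}] such that for every m ∈ ℤ^r: α(m) = η · Σ_{ν=0}^{μ(m)−1} λ^ν if μ(m) ≥ 1; α(m) = 0 if μ(m) = 0; and α(m) = −η · Σ_{ν=μ(m)}^{−1} λ^ν if μ(m) ≤ −1. -/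
noncomputable section

/-- The Laurent polynomial ring `ℤ[λ, λ⁻¹]`, i.e. the group ring `ℤ[ℤ]`. -/
abbrev LaurentZ : Type := AddMonoidAlgebra ℤ ℤ

/-- The monomial `λ^u` in `ℤ[λ, λ⁻¹]`. -/
def lam (u : ℤ) : LaurentZ := AddMonoidAlgebra.single u 1

/-- A 1-cocycle for the action `m • a = λ^{μ(m)} a` of `ℤ^r` on `ℤ[λ, λ⁻¹]`. -/
def IsCocycle {r : ℕ} (μ : (Fin r → ℤ) →+ ℤ) (α : (Fin r → ℤ) → LaurentZ) : Prop :=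
  ∀ m m' : Fin r → ℤ, α (m + m') = lam (μ m) * α m' + α m

lemma lam_mul (a b : ℤ) : lam a * lam b = lam (a + b) := by
  unfold lam
  rw [AddMonoidAlgebra.single_mul_single, one_mul]

lemma lam_zero : lam 0 = 1 := rfl

lemma lam_pow (n : ℕ) : lam (n : ℤ) = lam 1 ^ n := by
  induction n with
  | zero => simp [lam_zero]
  | succ k ih =>
    rw [pow_succ, ← ih, lam_mul]
    push_cast
    ring_nf

lemma key_sum (n : ℕ) :
    (∑ ν ∈ Finset.range n, lam (ν : ℤ)) * (lam 1 - 1) = lam (n : ℤ) - 1 := by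
  simp_rw [lam_pow]
  exact geom_sum_mul _ _

lemma lam_one_sub_one_ne_zero : lam 1 - 1 ≠ 0 := by
  intro h
  rw [sub_eq_zero] at h
  have := congrArg (fun f : LaurentZ => f.coeff 1) h
  simp only [lam, AddMonoidAlgebra.one_def, AddMonoidAlgebra.coeff_single] at this
  rw [Finsupp.single_apply, Finsupp.single_apply] at this
  simp at this

theorem cocycle_structure {r : ℕ} (μ : (Fin r → ℤ) →+ ℤ) (hμ : Function.Surjective μ)
    (α : (Fin r → ℤ) → LaurentZ) (hα : IsCocycle μ α) :
    ∃ η : LaurentZ, ∀ m : Fin r → ℤ,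
      (1 ≤ μ m → α m = η * ∑ ν ∈ Finset.range (μ m).toNat, lam (ν : ℤ)) ∧
      (μ m = 0 → α m = 0) ∧
      (μ m ≤ -1 → α m = -(η * ∑ ν ∈ Finset.range (-μ m).toNat, lam (μ m + ν))) := by
  obtain ⟨m₀, hm₀⟩ := hμ 1
  refine ⟨α m₀, fun m => ?_⟩
  have hx := lam_one_sub_one_ne_zero
  have hcomm : (lam (μ m) - 1) * α m₀ = (lam 1 - 1) * α m := by
    have h1 := hα m m₀
    have h2 := hα m₀ m
    rw [add_comm m₀ m] at h2
    rw [hm₀] at h2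
    linear_combination h1.symm.trans h2
  refine ⟨?_, ?_, ?_⟩
  · intro h
    apply mul_left_cancel₀ hx
    have hk : ((μ m).toNat : ℤ) = μ m := Int.toNat_of_nonneg (by omega)
    have hs := key_sum (μ m).toNat
    rw [hk] at hs
    linear_combination -hcomm - α m₀ * hs
  · intro h
    apply mul_left_cancel₀ hx
    rw [h, lam_zero] at hcomm
    linear_combination -hcomm
  · intro h
    apply mul_left_cancel₀ hx
    set k := (-μ m).toNat with hkdef
    have hk : (k : ℤ) = -μ m := Int.toNat_of_nonneg (by omega)
    have hs := key_sum k
    have hsum : ∑ ν ∈ Finset.range k, lam (μ m + ν) =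
        lam (μ m) * ∑ ν ∈ Finset.range k, lam (ν : ℤ) := by
      rw [Finset.mul_sum]
      exact Finset.sum_congr rfl fun ν _ => (lam_mul _ _).symm
    have hinv : lam (μ m) * lam (k : ℤ) = 1 := by
      rw [lam_mul, hk]
      simp [lam_zero]
    rw [hsum]
    linear_combination -hcomm + α m₀ * lam (μ m) * hs + α m₀ * hinv
end
end

section
/- (Generalized Wronskian criterion.) Let K be a field which is a D-module algebra. Then elements a_1, …, a_n ∈ K are linearly independent over the subfield of constants K^D if and only if there exist h_1, …, h_n ∈ D such that the determinant det( (h_i · a_j)_{i,j} ) of the n×n matrix with entries h_i·a_j ∈ K is nonzero. -/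
open scoped TensorProduct

noncomputable section

variable (R D K : Type*) [Field R] [Ring D] [Bialgebra R D]
  [Field K] [Algebra R K] [Module D K] [IsScalarTower R D K]

/-- Sweedler sum `d ⊗ e ↦ (d • a) * (e • b)` as a linear map on `D ⊗ D`. -/
def measureAux (a b : K) : D ⊗[R] D →ₗ[R] K :=
  TensorProduct.lift <| LinearMap.mk₂ R (fun d e => (d • a) * (e • b))
    (fun d d' e => by
      show ((d + d') • a) * (e • b) = (d • a) * (e • b) + (d' • a) * (e • b)
      rw [add_smul, add_mul])
    (fun r d e => by
      show ((r • d) • a) * (e • b) = r • ((d • a) * (e • b))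
      rw [smul_assoc, smul_mul_assoc])
    (fun d e e' => by
      show (d • a) * ((e + e') • b) = (d • a) * (e • b) + (d • a) * (e' • b)
      rw [add_smul, mul_add])
    (fun r d e => by
      show (d • a) * ((r • e) • b) = r • ((d • a) * (e • b))
      rw [smul_assoc, mul_smul_comm])

/-- `x` is a constant (`D`-invariant): `d • x = ε(d) x` for every `d ∈ D`. -/
def IsConst (x : K) : Prop :=
  ∀ d : D, d • x = (Coalgebra.counit (R := R) d) • x

@[simp] lemma measureAux_tmul (a b : K) (x y : D) :
    measureAux R D K a b (x ⊗ₜ[R] y) = (x • a) * (y • b) := rfl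

/-- The action on a fixed element, as an `R`-linear map. -/
def actL (a : K) : D →ₗ[R] K where
  toFun d := d • a
  map_add' d e := add_smul d e a
  map_smul' r d := by simp [smul_assoc]

@[simp] lemma actL_apply (a : K) (d : D) : actL R D K a d = d • a := rfl

lemma isConst_smul_mul
    (hmul : ∀ (d : D) (a b : K),
      d • (a * b) = measureAux R D K a b (Coalgebra.comul (R := R) d))
    {c : K} (hc : IsConst R D K c) (d : D) (b : K) :
    d • (c * b) = c * (d • b) := by
  have h1 : measureAux R D K c b =
      LinearMap.mulLeft R c ∘ₗ actL R D K b ∘ₗ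
        (TensorProduct.lid R D).toLinearMap ∘ₗ
          LinearMap.rTensor D (Coalgebra.counit (R := R) (A := D)) := by
    apply TensorProduct.ext'
    intro x y
    simp only [measureAux_tmul, LinearMap.comp_apply, LinearMap.rTensor_tmul,
      TensorProduct.lid_tmul, LinearEquiv.coe_coe,
      LinearMap.mulLeft_apply, actL_apply, hc x]
    calc (Coalgebra.counit (R := R) x • c) * (y • b)
        = Coalgebra.counit (R := R) x • (c * (y • b)) := smul_mul_assoc _ _ _
      _ = c * (Coalgebra.counit (R := R) x • (y • b)) := (mul_smul_comm _ _ _).symm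
      _ = c * ((Coalgebra.counit (R := R) x • y) • b) := by rw [smul_assoc]
  rw [hmul, h1]
  simp only [LinearMap.comp_apply]
  rw [Coalgebra.rTensor_counit_comul (R := R) d]
  simp

lemma isConst_zero : IsConst R D K 0 := fun d => by simp

lemma isConst_neg {x : K} (h : IsConst R D K x) : IsConst R D K (-x) := fun d => by
  rw [smul_neg, h d, smul_neg]

/-- Key lemma: a proper `D`-stable `K`-subspace of `K^m` is annihilated by a
nonzero vector of constants. -/
lemma key_orth
    (hone : ∀ d : D, d • (1 : K) = (Coalgebra.counit (R := R) d) • (1 : K)) :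
    ∀ (m : ℕ) (p : Submodule K (Fin m → K)),
      (∀ (d : D) (v : Fin m → K), v ∈ p → (fun j => d • v j) ∈ p) → p ≠ ⊤ →
      ∃ u : Fin m → K, (∀ j, IsConst R D K (u j)) ∧ u ≠ 0 ∧
        ∀ v ∈ p, ∑ j, u j * v j = 0 := by
  intro m
  induction m with
  | zero =>
    intro p _ hne
    refine absurd (Submodule.eq_top_iff'.2 fun x => ?_) hne
    have hx : x = 0 := Subsingleton.elim _ _
    rw [hx]; exact p.zero_mem
  | succ m ih =>
    intro p hstab hne
    set π : (Fin (m + 1) → K) →ₗ[K] (Fin m → K) := LinearMap.funLeft K K Fin.castSucc with hπ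
    by_cases hbar : p.map π = ⊤
    · -- the projection is everything; `p` is the graph of a constant-coefficient map
      have hzero : ∀ x : Fin (m + 1) → K,
          (∀ j : Fin m, x (Fin.castSucc j) = 0) → x ∈ p → x (Fin.last m) = 0 := by
        intro x hx hxp
        by_contra hlast
        apply hne
        rw [Submodule.eq_top_iff']
        intro w
        have hmem : π w ∈ p.map π := hbar ▸ Submodule.mem_top
        obtain ⟨v, hv, hvw⟩ := hmem
        have hw : w = v + ((w (Fin.last m) - v (Fin.last m)) * (x (Fin.last m))⁻¹) • x := by
          funext k
          refine Fin.lastCases ?_ ?_ k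
          · simp only [Pi.add_apply, Pi.smul_apply, smul_eq_mul]
            rw [mul_assoc, inv_mul_cancel₀ hlast, mul_one]
            ring
          · intro j
            have h2 : v (Fin.castSucc j) = w (Fin.castSucc j) := by
              simpa [π] using congrFun hvw j
            simp [Pi.add_apply, hx j, h2]
        rw [hw]
        exact p.add_mem hv (p.smul_mem _ hxp)
      have hexists : ∀ j : Fin m, ∃ w : Fin (m + 1) → K, w ∈ p ∧ π w = Pi.single j 1 := by
        intro j
        have hmem : (Pi.single j 1 : Fin m → K) ∈ p.map π := hbar ▸ Submodule.mem_top
        obtain ⟨w, hw, hw2⟩ := hmem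
        exact ⟨w, hw, hw2⟩
      choose wv hwv hwπ using hexists
      set b : Fin m → K := fun j => wv j (Fin.last m) with hb
      have hcoord : ∀ (i : Fin m) (j : Fin m),
          wv i (Fin.castSucc j) = if j = i then 1 else 0 := by
        intro i j
        have := congrFun (hwπ i) j
        simpa [π, Pi.single_apply] using this
      have claim : ∀ v ∈ p, v (Fin.last m) = ∑ j, v (Fin.castSucc j) * b j := by
        intro v hv
        set s : Fin (m + 1) → K := ∑ j, v (Fin.castSucc j) • wv j with hs
        have hsp : s ∈ p := Submodule.sum_mem _ fun j _ => p.smul_mem _ (hwv j)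
        have hdiff : ∀ j : Fin m, (v - s) (Fin.castSucc j) = 0 := by
          intro j
          have hsj : s (Fin.castSucc j) = v (Fin.castSucc j) := by
            rw [hs]
            simp only [Finset.sum_apply, Pi.smul_apply, smul_eq_mul, hcoord]
            simp
          simp [Pi.sub_apply, hsj]
        have h0 := hzero (v - s) hdiff (p.sub_mem hv hsp)
        have hslast : s (Fin.last m) = ∑ j, v (Fin.castSucc j) * b j := by
          rw [hs]; simp [hb]
        have : v (Fin.last m) - s (Fin.last m) = 0 := h0
        rw [sub_eq_zero] at this
        rw [this, hslast]
      have hbconst : ∀ j, IsConst R D K (b j) := by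
        intro j d
        set x : Fin (m + 1) → K :=
          (fun k => d • wv j k) - (Coalgebra.counit (R := R) d) • wv j with hx
        have hxp : x ∈ p :=
          p.sub_mem (hstab d _ (hwv j)) (p.smul_of_tower_mem _ (hwv j))
        have hxz : ∀ k : Fin m, x (Fin.castSucc k) = 0 := by
          intro k
          have h1 : x (Fin.castSucc k) =
              d • (if k = j then (1 : K) else 0) -
                Coalgebra.counit (R := R) d • (if k = j then (1 : K) else 0) := by
            rw [hx]
            simp only [Pi.sub_apply, Pi.smul_apply, hcoord j k]
          rw [h1]
          by_cases hkj : k = j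
          · rw [if_pos hkj, hone d, sub_self]
          · rw [if_neg hkj, smul_zero, smul_zero, sub_zero]
        have h0 := hzero x hxz hxp
        have hxl : x (Fin.last m) =
            d • b j - Coalgebra.counit (R := R) d • b j := by
          rw [hx]
          simp only [Pi.sub_apply, Pi.smul_apply, hb]
        rw [hxl, sub_eq_zero] at h0
        exact h0
      refine ⟨Fin.snoc b (-1), ?_, ?_, ?_⟩
      · intro j
        refine Fin.lastCases ?_ ?_ j
        · rw [Fin.snoc_last]
          exact isConst_neg R D K (fun d => hone d)
        · intro i
          rw [Fin.snoc_castSucc]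
          exact hbconst i
      · intro h0
        have := congrFun h0 (Fin.last m)
        simp [Fin.snoc_last] at this
      · intro v hv
        rw [Fin.sum_univ_castSucc]
        simp only [Fin.snoc_castSucc, Fin.snoc_last, neg_one_mul]
        rw [claim v hv, add_neg_eq_zero]
        exact Finset.sum_congr rfl fun j _ => mul_comm _ _
    · -- the projection is proper: apply the induction hypothesis
      have hstab' : ∀ (d : D) (v' : Fin m → K), v' ∈ p.map π →
          (fun j => d • v' j) ∈ p.map π := by
        intro d v' hv'
        obtain ⟨v, hv, rfl⟩ := hv'
        exact ⟨fun k => d • v k, hstab d v hv, by funext j; simp [π]⟩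
      obtain ⟨u', hc', hne', horth'⟩ := ih (p.map π) hstab' hbar
      refine ⟨Fin.snoc u' 0, ?_, ?_, ?_⟩
      · intro j
        refine Fin.lastCases ?_ ?_ j
        · rw [Fin.snoc_last]
          exact isConst_zero R D K
        · intro i
          rw [Fin.snoc_castSucc]
          exact hc' i
      · intro h0
        apply hne'
        funext j
        simpa [Fin.snoc_castSucc] using congrFun h0 (Fin.castSucc j)
      · intro v hv
        rw [Fin.sum_univ_castSucc]
        simp only [Fin.snoc_castSucc, Fin.snoc_last, zero_mul, add_zero]
        simpa [π] using horth' (π v) (Submodule.mem_map_of_mem hv)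

/-- **Generalized Wronskian criterion** (Takeuchi): elements `a₁, …, aₙ` of a
`D`-module field `K` are linearly independent over the subfield of constants `K^D`
iff `det((hᵢ • aⱼ)ᵢⱼ) ≠ 0` for some `h₁, …, hₙ ∈ D`. -/
theorem linearIndependent_over_constants_iff_wronskian
    (hone : ∀ d : D, d • (1 : K) = (Coalgebra.counit (R := R) d) • (1 : K))
    (hmul : ∀ (d : D) (a b : K),
      d • (a * b) = measureAux R D K a b (Coalgebra.comul (R := R) d))
    (n : ℕ) (a : Fin n → K) :
    (∀ c : Fin n → K, (∀ i, IsConst R D K (c i)) →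
        ∑ i, c i * a i = 0 → ∀ i, c i = 0) ↔
      ∃ h : Fin n → D, (Matrix.of fun i j => (h i) • (a j)).det ≠ 0 := by
  constructor
  · -- independence over constants implies some Wronskian is nonzero
    intro hLI
    by_contra hno
    push_neg at hno
    set S : Set (Fin n → K) := Set.range (fun g : D => fun j => g • a j) with hS
    have hstab : ∀ (v : Fin n → K), v ∈ Submodule.span K S →
        ∀ (d : D), (fun j => d • v j) ∈ Submodule.span K S := by
      intro v hv
      induction hv using Submodule.span_induction with
      | mem x hx =>
        intro d
        obtain ⟨g, rfl⟩ := hx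
        exact Submodule.subset_span ⟨d * g, by funext j; simp [mul_smul]⟩
      | zero =>
        intro d
        have h1 : (fun j => d • (0 : Fin n → K) j) = (0 : Fin n → K) := by
          funext j; simp
        rw [h1]
        exact Submodule.zero_mem _
      | add x y hx hy ihx ihy =>
        intro d
        have h1 : (fun j => d • (x + y) j) = (fun j => d • x j) + fun j => d • y j := by
          funext j; simp [smul_add]
        rw [h1]
        exact Submodule.add_mem _ (ihx d) (ihy d)
      | smul c x hx ihx =>
        intro d
        have hrep : ∀ t : D ⊗[R] D,
            (fun j => measureAux R D K c (x j) t) ∈ Submodule.span K S := by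
          intro t
          induction t using TensorProduct.induction_on with
          | zero =>
            have h1 : (fun j => measureAux R D K c (x j) 0) = (0 : Fin n → K) := by
              funext j; simp
            rw [h1]
            exact Submodule.zero_mem _
          | tmul y z =>
            have h1 : (fun j => measureAux R D K c (x j) (y ⊗ₜ[R] z)) =
                (y • c) • fun j => z • x j := by
              funext j; simp
            rw [h1]
            exact Submodule.smul_mem _ _ (ihx z)
          | add t1 t2 ih1 ih2 =>
            have h1 : (fun j => measureAux R D K c (x j) (t1 + t2)) =
                (fun j => measureAux R D K c (x j) t1) +
                  fun j => measureAux R D K c (x j) t2 := by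
              funext j; simp
            rw [h1]
            exact Submodule.add_mem _ ih1 ih2
        have h5 : (fun j => d • (c • x) j) =
            fun j => measureAux R D K c (x j) (Coalgebra.comul (R := R) d) := by
          funext j
          rw [Pi.smul_apply, smul_eq_mul, hmul d c (x j)]
        rw [h5]
        exact hrep (Coalgebra.comul (R := R) d)
    have hproper : Submodule.span K S ≠ ⊤ := by
      intro htop
      obtain ⟨bset, hbS, hbspan, hbind⟩ := exists_linearIndependent K S
      rw [htop] at hbspan
      have B : Module.Basis bset K (Fin n → K) :=
        Module.Basis.mk hbind (by rw [Subtype.range_coe, hbspan])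
      have e : bset ≃ Fin n := B.indexEquiv (Pi.basisFun K (Fin n))
      have hrind : LinearIndependent K (fun i : Fin n => ((e.symm i : bset) : Fin n → K)) :=
        hbind.comp e.symm e.symm.injective
      have hrS : ∀ i : Fin n, ((e.symm i : bset) : Fin n → K) ∈ S :=
        fun i => hbS (e.symm i).2
      choose g hg using fun i => hrS i
      have hrows : (fun i => (Matrix.of fun i j => g i • a j) i) =
          fun i : Fin n => ((e.symm i : bset) : Fin n → K) := by
        funext i
        exact hg i
      have : IsUnit (Matrix.of fun i j => g i • a j) := by
        rw [← Matrix.linearIndependent_rows_iff_isUnit]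
        change LinearIndependent K (fun i => (Matrix.of fun i j => g i • a j) i)
        rw [hrows]
        exact hrind
      exact ((Matrix.isUnit_iff_isUnit_det _).mp this).ne_zero (hno g)
    obtain ⟨u, huc, hune, huorth⟩ :=
      key_orth R D K hone n (Submodule.span K S)
        (fun d v hv => hstab v hv d) hproper
    have hmem1 : (fun j => (1 : D) • a j) ∈ Submodule.span K S :=
      Submodule.subset_span ⟨1, rfl⟩
    have hrel : ∑ i, u i * a i = 0 := by
      have := huorth _ hmem1
      simpa [one_smul] using this
    exact hune (funext fun i => hLI u huc hrel i)
  · -- a nonzero Wronskian implies independence over constants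
    rintro ⟨h, hdet⟩ c hc hsum i
    have hrow : ∀ k, ∑ i, (h k • a i) * c i = 0 := by
      intro k
      have h0 : h k • (∑ i, c i * a i) = (0 : K) := by rw [hsum, smul_zero]
      rw [Finset.smul_sum] at h0
      calc ∑ i, (h k • a i) * c i = ∑ i, h k • (c i * a i) := by
            refine Finset.sum_congr rfl fun i _ => ?_
            rw [isConst_smul_mul R D K hmul (hc i), mul_comm]
          _ = 0 := h0
    have hmv : (Matrix.of fun k i => h k • a i).mulVec c = 0 := by
      funext k
      simpa [Matrix.mulVec, dotProduct] using hrow k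
    have := Matrix.eq_zero_of_mulVec_eq_zero hdet hmv
    exact congrFun this i
end
end
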